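/- Let d ≥ 1 be an integer, let Q be a finite (left) quasifield with q elements, and let A ⊆ Q satisfy |A| > q^{(d+2)/(2d+2)}. Then every element γ ∈ Q can be written as γ = a + a' + a₁·b₁ + a₂·b₂ + ⋯ + a_d·b_d with a, a', a₁, …, a_d, b₁, …, b_d ∈ A; that is, Q = A + A + A·A + ⋯ + A·A (with d summands A·A). -/

import Mathlib

/-- A finite (left) quasifield. -/
class Quasifield (Q : Type*) extends AddCommGroup Q, Mul Q, One Q where
  one_ne_zero : (1 : Q) ≠ 0
  one_mul : ∀ a : Q, 1 * a = a
  mul_one : ∀ a : Q, a * 1 = a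
  zero_mul : ∀ a : Q, 0 * a = 0
  mul_zero : ∀ a : Q, a * 0 = 0
  mul_ne_zero : ∀ a b : Q, a ≠ 0 → b ≠ 0 → a * b ≠ 0
  existsUnique_mul_left : ∀ a b : Q, a ≠ 0 → b ≠ 0 → ∃! x : Q, a * x = b
  existsUnique_mul_right : ∀ a b : Q, a ≠ 0 → b ≠ 0 → ∃! y : Q, y * a = b
  left_distrib : ∀ a b c : Q, a * (b + c) = a * b + a * c
  existsUnique_affine : ∀ a b c : Q, a ≠ b → ∃! x : Q, a * x = b * x + c

/-- The kernel of a quasifield. -/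
def Quasifield.kernel (Q : Type*) [Quasifield Q] : Set Q :=
  {k | (∀ x y : Q, (x + y) * k = x * k + y * k) ∧ ∀ x y : Q, (x * y) * k = x * (y * k)}

set_option linter.unusedSectionVars false

open Finset Complex

namespace QFAux

variable {Q : Type*} [Quasifield Q] [Fintype Q] [DecidableEq Q]

lemma qf_bij {a a' : Q} (h : a ≠ a') : Function.Bijective (fun b : Q => a * b - a' * b) := by
  rw [Function.bijective_iff_existsUnique]
  intro c
  obtain ⟨x, hx, hu⟩ := Quasifield.existsUnique_affine a a' c h
  exact ⟨x, by simp [sub_eq_iff_eq_add, hx], fun y hy => hu y (by simp only [] at hy; rw [sub_eq_iff_eq_add, add_comm] at hy; exact hy)⟩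

lemma sum_mul_conj {ψ : AddChar Q ℂ} (hψ : ψ ≠ 0) (a a' : Q) :
    ∑ b : Q, ψ (a * b) * (starRingEnd ℂ) (ψ (a' * b)) =
      if a = a' then (Fintype.card Q : ℂ) else 0 := by
  simp_rw [← AddChar.map_neg_eq_conj, ← AddChar.map_add_eq_mul, ← sub_eq_add_neg]
  by_cases h : a = a'
  · subst h; simp [Finset.card_univ]
  · rw [if_neg h]
    calc ∑ b : Q, ψ (a * b - a' * b) = ∑ y : Q, ψ y :=
          Fintype.sum_bijective _ (qf_bij h) _ _ (fun b => rfl)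
      _ = 0 := AddChar.sum_eq_zero_iff_ne_zero.2 hψ


lemma col_l2 (A : Finset Q) {ψ : AddChar Q ℂ} (hψ : ψ ≠ 0) :
    ∑ b : Q, ‖∑ a ∈ A, ψ (a * b)‖ ^ 2 = (A.card : ℝ) * Fintype.card Q := by
  have key : ((∑ b : Q, ‖∑ a ∈ A, ψ (a * b)‖ ^ 2 : ℝ) : ℂ)
      = (A.card : ℂ) * Fintype.card Q := by
    push_cast
    calc ∑ b : Q, (‖∑ a ∈ A, ψ (a * b)‖ : ℂ) ^ 2
        = ∑ b : Q, (∑ a ∈ A, ψ (a * b)) * (starRingEnd ℂ) (∑ a ∈ A, ψ (a * b)) := by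
          refine Finset.sum_congr rfl fun b _ => ?_
          rw [Complex.mul_conj']
      _ = ∑ b : Q, ∑ a ∈ A, ∑ a' ∈ A, ψ (a * b) * (starRingEnd ℂ) (ψ (a' * b)) := by
          refine Finset.sum_congr rfl fun b _ => ?_
          rw [map_sum, Finset.sum_mul_sum]
      _ = ∑ a ∈ A, ∑ a' ∈ A, ∑ b : Q, ψ (a * b) * (starRingEnd ℂ) (ψ (a' * b)) := by
          rw [Finset.sum_comm]
          exact Finset.sum_congr rfl fun a _ => Finset.sum_comm
      _ = ∑ a ∈ A, ∑ a' ∈ A, if a = a' then (Fintype.card Q : ℂ) else 0 := by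
          exact Finset.sum_congr rfl fun a _ => Finset.sum_congr rfl fun a' _ =>
            sum_mul_conj hψ a a'
      _ = (A.card : ℂ) * Fintype.card Q := by
          rw [Finset.sum_congr rfl fun a (ha : a ∈ A) =>
            Finset.sum_ite_eq A a (fun _ => (Fintype.card Q : ℂ))]
          simp [Finset.sum_ite_of_true, mul_comm]
  exact_mod_cast key


lemma S_bound (A : Finset Q) {ψ : AddChar Q ℂ} (hψ : ψ ≠ 0) :
    ‖∑ a ∈ A, ∑ b ∈ A, ψ (a * b)‖ ≤ (A.card : ℝ) * Real.sqrt (Fintype.card Q) := by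
  rw [Finset.sum_comm]
  set F : Q → ℂ := fun b => ∑ a ∈ A, ψ (a * b) with hF
  have h1 : ‖∑ b ∈ A, F b‖ ≤ ∑ b ∈ A, ‖F b‖ := norm_sum_le _ _
  have h2 : (∑ b ∈ A, ‖F b‖) ^ 2 ≤ (A.card : ℝ) * ∑ b ∈ A, ‖F b‖ ^ 2 :=
    sq_sum_le_card_mul_sum_sq
  have h3 : ∑ b ∈ A, ‖F b‖ ^ 2 ≤ ∑ b : Q, ‖F b‖ ^ 2 :=
    Finset.sum_le_sum_of_subset_of_nonneg (Finset.subset_univ A)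
      (fun _ _ _ => by positivity)
  have h4 : ∑ b : Q, ‖F b‖ ^ 2 = (A.card : ℝ) * Fintype.card Q := col_l2 A hψ
  have h5 : ‖∑ b ∈ A, F b‖ ^ 2 ≤ (A.card : ℝ) ^ 2 * Fintype.card Q := by
    calc ‖∑ b ∈ A, F b‖ ^ 2 ≤ (∑ b ∈ A, ‖F b‖) ^ 2 := by
          apply pow_le_pow_left₀ (norm_nonneg _) h1
      _ ≤ (A.card : ℝ) * ∑ b : Q, ‖F b‖ ^ 2 := le_trans h2 (by
          apply mul_le_mul_of_nonneg_left h3 (by positivity))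
      _ = (A.card : ℝ) ^ 2 * Fintype.card Q := by rw [h4]; ring
  have h6 : ‖∑ b ∈ A, F b‖ ≤ Real.sqrt ((A.card : ℝ) ^ 2 * Fintype.card Q) := by
    rw [show ‖∑ b ∈ A, F b‖ = Real.sqrt (‖∑ b ∈ A, F b‖ ^ 2) by
      rw [Real.sqrt_sq (norm_nonneg _)]]
    exact Real.sqrt_le_sqrt h5
  calc ‖∑ b ∈ A, F b‖ ≤ Real.sqrt ((A.card : ℝ) ^ 2 * Fintype.card Q) := h6
    _ = (A.card : ℝ) * Real.sqrt (Fintype.card Q) := by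
        rw [Real.sqrt_mul (by positivity), Real.sqrt_sq (by positivity)]

lemma parseval (A : Finset Q) :
    ∑ ψ : AddChar Q ℂ, ‖∑ a ∈ A, ψ a‖ ^ 2 = (Fintype.card Q : ℝ) * A.card := by
  have key : ((∑ ψ : AddChar Q ℂ, ‖∑ a ∈ A, ψ a‖ ^ 2 : ℝ) : ℂ)
      = (Fintype.card Q : ℂ) * A.card := by
    push_cast
    calc ∑ ψ : AddChar Q ℂ, (‖∑ a ∈ A, ψ a‖ : ℂ) ^ 2
        = ∑ ψ : AddChar Q ℂ, ∑ a ∈ A, ∑ a' ∈ A, ψ a * (starRingEnd ℂ) (ψ a') := by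
          refine Finset.sum_congr rfl fun ψ _ => ?_
          rw [← Complex.mul_conj', map_sum, Finset.sum_mul_sum]
      _ = ∑ a ∈ A, ∑ a' ∈ A, ∑ ψ : AddChar Q ℂ, ψ (a - a') := by
          rw [Finset.sum_comm]
          refine Finset.sum_congr rfl fun a _ => ?_
          rw [Finset.sum_comm]
          refine Finset.sum_congr rfl fun a' _ => Finset.sum_congr rfl fun ψ _ => ?_
          rw [sub_eq_add_neg, AddChar.map_add_eq_mul, AddChar.map_neg_eq_conj]
      _ = ∑ a ∈ A, ∑ a' ∈ A, if a = a' then (Fintype.card Q : ℂ) else 0 := by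
          refine Finset.sum_congr rfl fun a _ => Finset.sum_congr rfl fun a' _ => ?_
          rw [AddChar.sum_apply_eq_ite]
          simp [sub_eq_zero]
      _ = (Fintype.card Q : ℂ) * A.card := by
          rw [Finset.sum_congr rfl fun a (ha : a ∈ A) =>
            Finset.sum_ite_eq A a (fun _ => (Fintype.card Q : ℂ))]
          simp [mul_comm]
  exact_mod_cast key


lemma map_sum' {ι : Type*} (ψ : AddChar Q ℂ) (s : Finset ι) (h : ι → Q) :
    ψ (∑ i ∈ s, h i) = ∏ i ∈ s, ψ (h i) := by
  classical
  induction s using Finset.cons_induction with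
  | empty => simp
  | cons a s ha ih => rw [Finset.sum_cons, Finset.prod_cons, AddChar.map_add_eq_mul, ih]

lemma sum_prod_split {α β : Type*} (s : Finset α) (t : Finset β) (f : α → ℂ) (g : β → ℂ) :
    ∑ x ∈ s ×ˢ t, f x.1 * g x.2 = (∑ a ∈ s, f a) * ∑ b ∈ t, g b := by
  rw [Finset.sum_mul_sum]
  exact Finset.sum_product s t fun x => f x.1 * g x.2

lemma factor (A : Finset Q) (d : ℕ) (γ : Q) (ψ : AddChar Q ℂ) :
    ∑ t ∈ A ×ˢ A ×ˢ (Fintype.piFinset fun _ : Fin d => A) ×ˢ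
        (Fintype.piFinset fun _ : Fin d => A),
      ψ (t.1 + t.2.1 + (∑ i, t.2.2.1 i * t.2.2.2 i) - γ) =
    ψ (-γ) * ((∑ a ∈ A, ψ a) * ((∑ a ∈ A, ψ a) *
      (∑ a ∈ A, ∑ b ∈ A, ψ (a * b)) ^ d)) := by
  classical
  set P := Fintype.piFinset fun _ : Fin d => A with hP
  have hpt : ∀ t ∈ A ×ˢ A ×ˢ P ×ˢ P,
      ψ (t.1 + t.2.1 + (∑ i, t.2.2.1 i * t.2.2.2 i) - γ) =
      ψ (-γ) * (ψ t.1 * (ψ t.2.1 * ∏ i, ψ (t.2.2.1 i * t.2.2.2 i))) := by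
    intro t _
    rw [sub_eq_add_neg, AddChar.map_add_eq_mul, AddChar.map_add_eq_mul,
      AddChar.map_add_eq_mul, map_sum']
    ring
  rw [Finset.sum_congr rfl hpt, ← Finset.mul_sum]
  congr 1
  calc ∑ t ∈ A ×ˢ A ×ˢ P ×ˢ P, ψ t.1 * (ψ t.2.1 * ∏ i, ψ (t.2.2.1 i * t.2.2.2 i))
      = (∑ a ∈ A, ψ a) * ∑ u ∈ A ×ˢ P ×ˢ P, ψ u.1 * ∏ i, ψ (u.2.1 i * u.2.2 i) :=
        sum_prod_split A (A ×ˢ P ×ˢ P) ψ (fun u => ψ u.1 * ∏ i, ψ (u.2.1 i * u.2.2 i))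
    _ = (∑ a ∈ A, ψ a) * ((∑ a ∈ A, ψ a) * ∑ v ∈ P ×ˢ P, ∏ i, ψ (v.1 i * v.2 i)) := by
        rw [sum_prod_split A (P ×ˢ P) ψ (fun v => ∏ i, ψ (v.1 i * v.2 i))]
    _ = (∑ a ∈ A, ψ a) * ((∑ a ∈ A, ψ a) * (∑ a ∈ A, ∑ b ∈ A, ψ (a * b)) ^ d) := by
        congr 2
        calc ∑ v ∈ P ×ˢ P, ∏ i, ψ (v.1 i * v.2 i)
            = ∑ f ∈ P, ∑ g ∈ P, ∏ i, ψ (f i * g i) := Finset.sum_product P P _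
          _ = ∑ f ∈ P, ∏ i, ∑ b ∈ A, ψ (f i * b) := by
              refine Finset.sum_congr rfl fun f _ => ?_
              exact Finset.sum_prod_piFinset A fun i b => ψ (f i * b)
          _ = ∏ i : Fin d, ∑ a ∈ A, ∑ b ∈ A, ψ (a * b) :=
              Finset.sum_prod_piFinset A fun i a => ∑ b ∈ A, ψ (a * b)
          _ = (∑ a ∈ A, ∑ b ∈ A, ψ (a * b)) ^ d := by
              rw [Finset.prod_const, Finset.card_univ, Fintype.card_fin]

end QFAux

open QFAux

/-- Theorem 1.11: if `d ≥ 1` and `A ⊆ Q` with `|A| > q^{(d+2)/(2d+2)}`, then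
`Q = A + A + A·A + ⋯ + A·A` (with `d` summands `A·A`). -/
theorem stmt_7 {Q : Type*} [Quasifield Q] [Fintype Q] [DecidableEq Q]
    (d : ℕ) (hd : 1 ≤ d) (A : Finset Q)
    (hA : (Fintype.card Q : ℝ) ^ (((d : ℝ) + 2) / (2 * (d : ℝ) + 2)) < (A.card : ℝ)) :
    ∀ γ : Q, ∃ a ∈ A, ∃ a' ∈ A, ∃ f g : Fin d → Q,
      (∀ i, f i ∈ A) ∧ (∀ i, g i ∈ A) ∧ γ = a + a' + ∑ i, f i * g i := by
  intro γ
  classical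
  set q : ℕ := Fintype.card Q with hqdef
  set n : ℕ := A.card with hndef
  have hq0 : (0:ℝ) < q := by
    have : 0 < q := Fintype.card_pos
    exact_mod_cast this
  have hn0 : (0:ℝ) < n := lt_trans (Real.rpow_pos_of_pos hq0 _) hA
  set P := Fintype.piFinset fun _ : Fin d => A with hPdef
  set D := A ×ˢ A ×ˢ P ×ˢ P with hDdef
  set N : ℕ := (D.filter fun t =>
    t.1 + t.2.1 + (∑ i, t.2.2.1 i * t.2.2.2 i) = γ).card with hNdef
  suffices hpos : 0 < N by
    obtain ⟨t, ht⟩ := Finset.card_pos.mp hpos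
    rw [Finset.mem_filter] at ht
    obtain ⟨htD, hteq⟩ := ht
    rw [hDdef] at htD
    simp only [Finset.mem_product] at htD
    obtain ⟨h1, h2, h3, h4⟩ := htD
    rw [hPdef] at h3 h4
    exact ⟨t.1, h1, t.2.1, h2, t.2.2.1, t.2.2.2,
      fun i => Fintype.mem_piFinset.mp h3 i, fun i => Fintype.mem_piFinset.mp h4 i, hteq.symm⟩
  -- Fourier identity
  have key : (q:ℂ) * N = ∑ ψ : AddChar Q ℂ, ψ (-γ) * ((∑ a ∈ A, ψ a) *
      ((∑ a ∈ A, ψ a) * (∑ a ∈ A, ∑ b ∈ A, ψ (a * b)) ^ d)) := by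
    calc (q:ℂ) * N
        = ∑ _t ∈ D.filter (fun t => t.1 + t.2.1 + (∑ i, t.2.2.1 i * t.2.2.2 i) = γ),
            (q:ℂ) := by
          rw [Finset.sum_const, nsmul_eq_mul, mul_comm]
      _ = ∑ t ∈ D, if t.1 + t.2.1 + (∑ i, t.2.2.1 i * t.2.2.2 i) = γ then (q:ℂ) else 0 :=
          Finset.sum_filter _ _
      _ = ∑ t ∈ D, ∑ ψ : AddChar Q ℂ, ψ (t.1 + t.2.1 + (∑ i, t.2.2.1 i * t.2.2.2 i) - γ) := by
          refine Finset.sum_congr rfl fun t _ => ?_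
          rw [AddChar.sum_apply_eq_ite]
          simp only [sub_eq_zero, hqdef]
      _ = ∑ ψ : AddChar Q ℂ, ∑ t ∈ D,
            ψ (t.1 + t.2.1 + (∑ i, t.2.2.1 i * t.2.2.2 i) - γ) := Finset.sum_comm
      _ = ∑ ψ : AddChar Q ℂ, ψ (-γ) * ((∑ a ∈ A, ψ a) *
            ((∑ a ∈ A, ψ a) * (∑ a ∈ A, ∑ b ∈ A, ψ (a * b)) ^ d)) :=
          Finset.sum_congr rfl fun ψ _ => factor A d γ ψ
  set E : ℂ := ∑ ψ ∈ Finset.univ.erase (0 : AddChar Q ℂ), ψ (-γ) * ((∑ a ∈ A, ψ a) *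
      ((∑ a ∈ A, ψ a) * (∑ a ∈ A, ∑ b ∈ A, ψ (a * b)) ^ d)) with hEdef
  have hsplit : (q:ℂ) * N = E + (n:ℂ) ^ (2 * d + 2) := by
    rw [key, ← Finset.sum_erase_add Finset.univ _ (Finset.mem_univ (0 : AddChar Q ℂ))]
    congr 1
    simp only [AddChar.zero_apply, one_mul, Finset.sum_const, nsmul_eq_mul, mul_one]
    push_cast
    ring
  have hEbound : ‖E‖ ≤ ((n:ℝ) * Real.sqrt q) ^ d * ((q:ℝ) * n) := by
    calc ‖E‖ ≤ ∑ ψ ∈ Finset.univ.erase (0 : AddChar Q ℂ),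
          ‖ψ (-γ) * ((∑ a ∈ A, ψ a) * ((∑ a ∈ A, ψ a) *
            (∑ a ∈ A, ∑ b ∈ A, ψ (a * b)) ^ d))‖ := norm_sum_le _ _
      _ ≤ ∑ ψ ∈ Finset.univ.erase (0 : AddChar Q ℂ),
          ((n:ℝ) * Real.sqrt q) ^ d * ‖∑ a ∈ A, ψ a‖ ^ 2 := by
          refine Finset.sum_le_sum fun ψ hψ => ?_
          have hψ0 : ψ ≠ 0 := Finset.ne_of_mem_erase hψ
          rw [norm_mul, norm_mul, norm_mul, AddChar.norm_apply, one_mul, norm_pow]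
          have hS : ‖∑ a ∈ A, ∑ b ∈ A, ψ (a * b)‖ ^ d ≤ ((n:ℝ) * Real.sqrt q) ^ d :=
            pow_le_pow_left₀ (norm_nonneg _) (S_bound A hψ0) d
          calc ‖∑ a ∈ A, ψ a‖ * (‖∑ a ∈ A, ψ a‖ * ‖∑ a ∈ A, ∑ b ∈ A, ψ (a * b)‖ ^ d)
              ≤ ‖∑ a ∈ A, ψ a‖ * (‖∑ a ∈ A, ψ a‖ * ((n:ℝ) * Real.sqrt q) ^ d) := by
                apply mul_le_mul_of_nonneg_left _ (norm_nonneg _)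
                exact mul_le_mul_of_nonneg_left hS (norm_nonneg _)
            _ = ((n:ℝ) * Real.sqrt q) ^ d * ‖∑ a ∈ A, ψ a‖ ^ 2 := by ring
      _ ≤ ∑ ψ : AddChar Q ℂ, ((n:ℝ) * Real.sqrt q) ^ d * ‖∑ a ∈ A, ψ a‖ ^ 2 :=
          Finset.sum_le_sum_of_subset_of_nonneg (Finset.subset_univ _)
            (fun _ _ _ => by positivity)
      _ = ((n:ℝ) * Real.sqrt q) ^ d * ((q:ℝ) * n) := by
          rw [← Finset.mul_sum, parseval A]
  have hreal : (n:ℝ) ^ (2 * d + 2) - (q:ℝ) * N ≤ ‖E‖ := by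
    have h2 : (((n:ℝ) ^ (2 * d + 2) - (q:ℝ) * N : ℝ) : ℂ) = -E := by
      push_cast
      rw [eq_neg_iff_add_eq_zero]
      have := hsplit
      push_cast at this ⊢
      linear_combination -this
    calc (n:ℝ) ^ (2 * d + 2) - (q:ℝ) * N ≤ |(n:ℝ) ^ (2 * d + 2) - (q:ℝ) * N| := le_abs_self _
      _ = ‖(((n:ℝ) ^ (2 * d + 2) - (q:ℝ) * N : ℝ) : ℂ)‖ := by rw [Complex.norm_real, Real.norm_eq_abs]
      _ = ‖E‖ := by rw [h2, norm_neg]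
  -- numeric inequality
  have hsqd : (Real.sqrt q) ^ d = (q:ℝ) ^ ((d:ℝ) / 2) := by
    rw [Real.sqrt_eq_rpow, ← Real.rpow_natCast ((q:ℝ) ^ ((1:ℝ)/2)) d, ← Real.rpow_mul hq0.le]
    congr 1
    ring
  have hkey : (q:ℝ) ^ (((d:ℝ) + 2) / 2) < (n:ℝ) ^ (d + 1) := by
    have he : (q:ℝ) ^ (((d:ℝ) + 2) / 2)
        = ((q:ℝ) ^ (((d:ℝ) + 2) / (2 * (d:ℝ) + 2))) ^ (d + 1) := by
      rw [← Real.rpow_natCast ((q:ℝ) ^ (((d:ℝ) + 2) / (2 * (d:ℝ) + 2))) (d + 1),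
        ← Real.rpow_mul hq0.le]
      congr 1
      have h2d : (2 * (d:ℝ) + 2) ≠ 0 := by positivity
      field_simp
      push_cast
      ring
    rw [he]
    exact pow_lt_pow_left₀ hA (Real.rpow_nonneg hq0.le _) (Nat.succ_ne_zero d)
  have hnum : ((n:ℝ) * Real.sqrt q) ^ d * ((q:ℝ) * n) < (n:ℝ) ^ (2 * d + 2) := by
    have hqsplit : (q:ℝ) * (Real.sqrt q) ^ d = (q:ℝ) ^ (((d:ℝ) + 2) / 2) := by
      rw [hsqd, show ((d:ℝ) + 2) / 2 = 1 + (d:ℝ)/2 by ring, Real.rpow_add hq0,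
        Real.rpow_one]
    calc ((n:ℝ) * Real.sqrt q) ^ d * ((q:ℝ) * n)
        = (n:ℝ) ^ (d + 1) * ((q:ℝ) * (Real.sqrt q) ^ d) := by rw [mul_pow]; ring
      _ = (n:ℝ) ^ (d + 1) * (q:ℝ) ^ (((d:ℝ) + 2) / 2) := by rw [hqsplit]
      _ < (n:ℝ) ^ (d + 1) * (n:ℝ) ^ (d + 1) :=
          mul_lt_mul_of_pos_left hkey (pow_pos hn0 _)
      _ = (n:ℝ) ^ (2 * d + 2) := by ring
  have hQN : (0:ℝ) < (q:ℝ) * N := by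
    have := hreal
    have := hEbound
    nlinarith [hnum]
  have hNpos : (0:ℝ) < (N:ℝ) := by
    by_contra h
    push_neg at h
    have hN0 : (N:ℝ) = 0 := le_antisymm h (Nat.cast_nonneg N)
    rw [hN0, mul_zero] at hQN
    exact lt_irrefl 0 hQN
  exact_mod_cast hNpos
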